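/- arXiv:1708.08343 — 2 statements merged into one kernel-verified Lean document; each statement's English description precedes it below -/
import Mathlib

section
/- Let T, L, σ > 0, let U ⊆ ℝ be a nonempty compact set, let f, b : [0,T] × [0,L] × U → ℝ be continuous, and let g : [0,L] → ℝ and y, r : [0,T] → ℝ be continuous. Define the Hamiltonian H(t,x,p) = inf_{u ∈ U} [ f(t,x,u) + b(t,x,u) p ]. Suppose φ₁, φ₂ : [0,T] × [0,L] → ℝ are continuous, have continuous partial derivative in t and continuous first and second partial derivatives in x on [0,T] × [0,L], and each φ = φᵢ satisfies: −∂_t φ(t,x) − H(t, x, ∂_x φ(t,x)) − (1/2) σ² ∂²_x φ(t,x) = 0 for all (t,x) ∈ [0,T] × [0,L], together with the boundary conditions φ(T,x) = g(x) for x ∈ [0,L], ∂_x φ(t,0) = −y(t) and ∂_x φ(t,L) = r(t) for t ∈ [0,T]. Then φ₁ = φ₂ on [0,T] × [0,L]. -/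
open Set Filter Topology

lemma maxOn_deriv_nonpos {f : ℝ → ℝ} {d a y : ℝ} {s : Set ℝ}
    (hmax : ∀ x ∈ s, f x ≤ f a) (hf : HasDerivWithinAt f d s a)
    (hy : 0 < y) (hseg : Icc a (a + y) ⊆ s) : d ≤ 0 := by
  have hmem : y ∈ posTangentConeAt s a := by
    apply mem_posTangentConeAt_of_segment_subset
    rwa [segment_eq_Icc (by linarith : a ≤ a + y)]
  have hloc : IsLocalMaxOn f s a := by
    exact eventually_nhdsWithin_of_forall hmax
  have := hloc.hasFDerivWithinAt_nonpos hf.hasFDerivWithinAt hmem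
  simp only [ContinuousLinearMap.smulRight_apply, ContinuousLinearMap.one_apply,
    ContinuousLinearMap.toSpanSingleton_apply, smul_eq_mul] at this
  nlinarith

lemma maxOn_deriv_nonneg {f : ℝ → ℝ} {d a y : ℝ} {s : Set ℝ}
    (hmax : ∀ x ∈ s, f x ≤ f a) (hf : HasDerivWithinAt f d s a)
    (hy : 0 < y) (hseg : Icc (a - y) a ⊆ s) : 0 ≤ d := by
  have hmem : -y ∈ posTangentConeAt s a := by
    apply mem_posTangentConeAt_of_segment_subset
    rw [segment_symm, segment_eq_Icc (by linarith : a + -y ≤ a)]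
    have : a + -y = a - y := by ring
    rwa [this]
  have hloc : IsLocalMaxOn f s a := eventually_nhdsWithin_of_forall hmax
  have := hloc.hasFDerivWithinAt_nonpos hf.hasFDerivWithinAt hmem
  simp only [ContinuousLinearMap.smulRight_apply, ContinuousLinearMap.one_apply,
    ContinuousLinearMap.toSpanSingleton_apply, smul_eq_mul] at this
  nlinarith

lemma secondDeriv_nonpos_at_max {z z' : ℝ → ℝ} {z'' a b x₀ : ℝ}
    (hab : x₀ ∈ Ioo a b)
    (hz : ∀ x ∈ Icc a b, HasDerivWithinAt z (z' x) (Icc a b) x)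
    (hz'' : HasDerivWithinAt z' z'' (Icc a b) x₀)
    (hmax : ∀ x ∈ Icc a b, z x ≤ z x₀) : z'' ≤ 0 := by
  have hx₀ : x₀ ∈ Icc a b := Ioo_subset_Icc_self hab
  -- z' x₀ = 0
  have hz'0 : z' x₀ = 0 := by
    have h1 : z' x₀ ≤ 0 := maxOn_deriv_nonpos hmax (hz x₀ hx₀) (by linarith [hab.2] : (0:ℝ) < b - x₀)
      (by intro u hu; exact ⟨by linarith [hu.1, hab.1], by linarith [hu.2]⟩)
    have h2 : 0 ≤ z' x₀ := maxOn_deriv_nonneg hmax (hz x₀ hx₀) (by linarith [hab.1] : (0:ℝ) < x₀ - a)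
      (by intro u hu; exact ⟨by linarith [hu.1], by linarith [hu.2, hab.2]⟩)
    linarith
  -- For every δ > 0, there is c ∈ (x₀, x₀+δ) ∩ (x₀, b) with z' c ≤ 0
  have key : ∀ δ > (0:ℝ), ∃ c, c ∈ Ioo x₀ b ∧ c < x₀ + δ ∧ z' c ≤ 0 := by
    intro δ hδ
    set x := min (x₀ + δ/2) ((x₀ + b)/2) with hxdef
    have hx1 : x₀ < x := lt_min (by linarith) (by linarith [hab.2])
    have hx2 : x ≤ (x₀ + b)/2 := min_le_right _ _
    have hxb : x < b := by linarith [hab.2]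
    have hsub : Icc x₀ x ⊆ Icc a b := fun u hu => ⟨by linarith [hu.1, hab.1], by linarith [hu.2]⟩
    have hcont : ContinuousOn z (Icc x₀ x) := fun u hu =>
      ((hz u (hsub hu)).continuousWithinAt).mono hsub
    have hdiff : ∀ u ∈ Ioo x₀ x, HasDerivAt z (z' u) u := by
      intro u hu
      have humem : u ∈ Icc a b := hsub (Ioo_subset_Icc_self hu)
      exact (hz u humem).hasDerivAt (Icc_mem_nhds (by linarith [hu.1, hab.1]) (by linarith [hu.2]))
    obtain ⟨c, hc, hcs⟩ := exists_hasDerivAt_eq_slope z z' hx1 hcont hdiff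
    refine ⟨c, ⟨hc.1, by linarith [hc.2]⟩, by
      have := min_le_left (x₀ + δ/2) ((x₀ + b)/2); linarith [hc.2], ?_⟩
    rw [hcs]
    apply div_nonpos_of_nonpos_of_nonneg
    · linarith [hmax x (hsub ⟨le_of_lt hx1, le_refl x⟩)]
    · linarith
  -- conclude via slope characterization
  by_contra hpos
  push_neg at hpos
  rw [hasDerivWithinAt_iff_tendsto_slope] at hz''
  have hev : ∀ᶠ c in 𝓝[Icc a b \ {x₀}] x₀, 0 < slope z' x₀ c :=
    hz'' (Ioi_mem_nhds hpos)
  have hfreq : ∃ᶠ c in 𝓝[Icc a b \ {x₀}] x₀, slope z' x₀ c ≤ 0 := by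
    rw [frequently_iff]
    intro U hU
    rw [mem_nhdsWithin] at hU
    obtain ⟨V, hVopen, hVx, hVU⟩ := hU
    obtain ⟨δ, hδ, hball⟩ := Metric.isOpen_iff.1 hVopen x₀ hVx
    obtain ⟨c, hc1, hc2, hc3⟩ := key δ hδ
    refine ⟨c, hVU ⟨hball ?_, ⟨⟨by linarith [hc1.1, hab.1], le_of_lt hc1.2⟩, by
      simp only [mem_singleton_iff]; intro h; rw [h] at hc1; exact lt_irrefl _ hc1.1⟩⟩, ?_⟩
    · rw [Real.ball_eq_Ioo]; exact ⟨by linarith [hc1.1], hc2⟩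
    · rw [slope_def_field, div_eq_mul_inv]
      rw [hz'0]
      have : z' c - 0 = z' c := by ring
      apply mul_nonpos_of_nonpos_of_nonneg
      · simpa using hc3
      · rw [inv_nonneg]; linarith [hc1.1]
  obtain ⟨c, hc1, hc2⟩ := (hfreq.and_eventually hev).exists
  linarith

lemma hamiltonian_lipschitz {U : Set ℝ} [Nonempty U] {c d : U → ℝ} {M F p q : ℝ}
    (hF : ∀ u : U, |c u| ≤ F) (hM : ∀ u : U, |d u| ≤ M) (hM0 : 0 ≤ M) :
    |(⨅ u : U, (c u + d u * p)) - (⨅ u : U, (c u + d u * q))| ≤ M * |p - q| := by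
  have bdd : ∀ r : ℝ, BddBelow (Set.range fun u : U => c u + d u * r) := by
    intro r
    refine ⟨-F - M * |r|, ?_⟩
    rintro x ⟨u, rfl⟩
    show -F - M * |r| ≤ c u + d u * r
    have h1 := abs_le.1 (hF u)
    have h2 := abs_le.1 (hM u)
    have : -(M * |r|) ≤ d u * r := by
      have := abs_mul (d u) r
      have h3 : |d u * r| ≤ M * |r| := by
        rw [abs_mul]; exact mul_le_mul_of_nonneg_right (hM u) (abs_nonneg r)
      linarith [neg_abs_le (d u * r)]
    linarith
  have onesided : ∀ p q : ℝ,
      (⨅ u : U, (c u + d u * p)) ≤ (⨅ u : U, (c u + d u * q)) + M * |p - q| := by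
    intro p q
    rw [← sub_le_iff_le_add]
    apply le_ciInf
    intro u
    have h1 : (⨅ u : U, (c u + d u * p)) ≤ c u + d u * p := ciInf_le (bdd p) u
    have h2 : d u * p - d u * q ≤ M * |p - q| := by
      have : d u * p - d u * q = d u * (p - q) := by ring
      rw [this]
      calc d u * (p - q) ≤ |d u * (p - q)| := le_abs_self _
        _ = |d u| * |p - q| := abs_mul _ _
        _ ≤ M * |p - q| := mul_le_mul_of_nonneg_right (hM u) (abs_nonneg _)
    linarith
  rw [abs_sub_le_iff]
  constructor
  · linarith [onesided p q]
  · have := onesided q p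
    rw [abs_sub_comm] at this
    linarith


/-- `φ` is a classical solution of the Hamilton–Jacobi–Bellman equation
`−∂ₜφ − H(t,x,∂ₓφ) − (1/2)σ²∂ₓₓφ = 0` on `[0,T] × [0,L]`, with Hamiltonian
`H(t,x,p) = inf_{u ∈ U} [f(t,x,u) + b(t,x,u) p]`, terminal condition
`φ(T,·) = g`, and Neumann boundary conditions `∂ₓφ(t,0) = −y(t)`,
`∂ₓφ(t,L) = r(t)`. The partial derivatives `∂ₜφ, ∂ₓφ, ∂ₓₓφ` (taken within
the domain) are required to exist and be continuous on `[0,T] × [0,L]`. -/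
def IsHJBSolution (T L σ : ℝ) (U : Set ℝ) (f b : ℝ → ℝ → ℝ → ℝ)
    (g y r : ℝ → ℝ) (φ : ℝ → ℝ → ℝ) : Prop :=
  ContinuousOn (fun q : ℝ × ℝ => φ q.1 q.2) (Set.Icc 0 T ×ˢ Set.Icc 0 L) ∧
  ∃ φt φx φxx : ℝ → ℝ → ℝ,
    ContinuousOn (fun q : ℝ × ℝ => φt q.1 q.2) (Set.Icc 0 T ×ˢ Set.Icc 0 L) ∧
    ContinuousOn (fun q : ℝ × ℝ => φx q.1 q.2) (Set.Icc 0 T ×ˢ Set.Icc 0 L) ∧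
    ContinuousOn (fun q : ℝ × ℝ => φxx q.1 q.2) (Set.Icc 0 T ×ˢ Set.Icc 0 L) ∧
    (∀ t ∈ Set.Icc (0 : ℝ) T, ∀ x ∈ Set.Icc (0 : ℝ) L,
      HasDerivWithinAt (fun s => φ s x) (φt t x) (Set.Icc 0 T) t ∧
      HasDerivWithinAt (fun z => φ t z) (φx t x) (Set.Icc 0 L) x ∧
      HasDerivWithinAt (fun z => φx t z) (φxx t x) (Set.Icc 0 L) x) ∧
    (∀ t ∈ Set.Icc (0 : ℝ) T, ∀ x ∈ Set.Icc (0 : ℝ) L,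
      -φt t x - (⨅ u : U, (f t x u + b t x u * φx t x))
        - (1 / 2) * σ ^ 2 * φxx t x = 0) ∧
    (∀ x ∈ Set.Icc (0 : ℝ) L, φ T x = g x) ∧
    (∀ t ∈ Set.Icc (0 : ℝ) T, φx t 0 = -(y t) ∧ φx t L = r t)


set_option maxHeartbeats 1000000 in
lemma hjb_le
    (T L σ : ℝ) (hT : 0 < T) (hL : 0 < L) (hσ : 0 < σ)
    (U : Set ℝ) (hUc : IsCompact U) (hUne : U.Nonempty)
    (f b : ℝ → ℝ → ℝ → ℝ)
    (hf : ContinuousOn (fun q : ℝ × ℝ × ℝ => f q.1 q.2.1 q.2.2)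
      (Set.Icc 0 T ×ˢ Set.Icc 0 L ×ˢ U))
    (hb : ContinuousOn (fun q : ℝ × ℝ × ℝ => b q.1 q.2.1 q.2.2)
      (Set.Icc 0 T ×ˢ Set.Icc 0 L ×ˢ U))
    (g y r : ℝ → ℝ)
    (φ₁ φ₂ : ℝ → ℝ → ℝ)
    (h₁ : IsHJBSolution T L σ U f b g y r φ₁)
    (h₂ : IsHJBSolution T L σ U f b g y r φ₂) :
    ∀ t ∈ Set.Icc (0 : ℝ) T, ∀ x ∈ Set.Icc (0 : ℝ) L, φ₁ t x ≤ φ₂ t x := by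
  haveI : Nonempty U := hUne.to_subtype
  obtain ⟨hc₁, φt₁, φx₁, φxx₁, hct₁, hcx₁, hcxx₁, hD₁, hP₁, hG₁, hB₁⟩ := h₁
  obtain ⟨hc₂, φt₂, φx₂, φxx₂, hct₂, hcx₂, hcxx₂, hD₂, hP₂, hG₂, hB₂⟩ := h₂
  -- bounds on f and b
  obtain ⟨F₀, hF₀⟩ := (isCompact_Icc.prod (isCompact_Icc.prod hUc)).exists_bound_of_continuousOn hf
  obtain ⟨M₀, hM₀⟩ := (isCompact_Icc.prod (isCompact_Icc.prod hUc)).exists_bound_of_continuousOn hb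
  set F : ℝ := max F₀ 0 with hFdef
  set M : ℝ := max M₀ 0 with hMdef
  have hM0 : 0 ≤ M := le_max_right _ _
  set K : ℝ := M * (4 / L) + (1 / 2) * σ ^ 2 * (8 / L ^ 2) + 1 with hKdef
  have hK1 : 1 ≤ K := by
    have h1 : 0 ≤ M * (4 / L) := mul_nonneg hM0 (by positivity)
    have h2 : 0 ≤ (1 / 2) * σ ^ 2 * (8 / L ^ 2) := by positivity
    simp only [hKdef]; linarith
  have main : ∀ ε > (0:ℝ), ∀ t ∈ Set.Icc (0:ℝ) T, ∀ x ∈ Set.Icc (0:ℝ) L,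
      φ₁ t x - φ₂ t x ≤ ε * Real.exp (K * (T - t)) * (1 + (2 * x / L - 1) ^ 2) := by
    intro ε hε
    set Z : ℝ × ℝ → ℝ := fun q => (φ₁ q.1 q.2 - φ₂ q.1 q.2)
      - ε * Real.exp (K * (T - q.1)) * (1 + (2 * q.2 / L - 1) ^ 2) with hZdef
    have hZcont : ContinuousOn Z (Set.Icc 0 T ×ˢ Set.Icc 0 L) := by
      apply (hc₁.sub hc₂).sub
      apply Continuous.continuousOn
      fun_prop
    obtain ⟨q₀, hq₀, hqmax⟩ := (isCompact_Icc.prod isCompact_Icc).exists_isMaxOn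
      ⟨(0, 0), by constructor <;> exact ⟨le_refl _, by positivity⟩⟩ hZcont
    have hmax : ∀ q ∈ Set.Icc (0:ℝ) T ×ˢ Set.Icc (0:ℝ) L, Z q ≤ Z q₀ := fun q hq => hqmax hq
    obtain ⟨t₀, x₀⟩ := q₀
    have ht₀ : t₀ ∈ Set.Icc (0:ℝ) T := hq₀.1
    have hx₀ : x₀ ∈ Set.Icc (0:ℝ) L := hq₀.2
    suffices hZ0 : Z (t₀, x₀) ≤ 0 by
      intro t ht x hx
      have := hmax (t, x) ⟨ht, hx⟩
      simp only [hZdef] at this hZ0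
      linarith
    rcases eq_or_lt_of_le (ht₀.2 : t₀ ≤ T) with htT | htT
    · -- terminal time: Z(T, x₀) ≤ 0
      have hterm : φ₁ t₀ x₀ - φ₂ t₀ x₀ = 0 := by
        rw [htT, hG₁ x₀ hx₀, hG₂ x₀ hx₀]; ring
      simp only [hZdef]
      rw [hterm]
      have : (0:ℝ) < ε * Real.exp (K * (T - t₀)) * (1 + (2 * x₀ / L - 1) ^ 2) := by positivity
      linarith
    · exfalso
      set e : ℝ := Real.exp (K * (T - t₀)) with hedef
      have he : 0 < e := Real.exp_pos _
      set c : ℝ := 1 + (2 * x₀ / L - 1) ^ 2 with hcdef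
      have hc1 : 1 ≤ c := by simp only [hcdef]; nlinarith [sq_nonneg (2 * x₀ / L - 1)]
      -- time direction
      have hwt : φt₁ t₀ x₀ - φt₂ t₀ x₀ ≤ -(ε * K * e * c) := by
        have hd1 : HasDerivWithinAt (fun s => φ₁ s x₀) (φt₁ t₀ x₀) (Set.Icc 0 T) t₀ :=
          (hD₁ t₀ ht₀ x₀ hx₀).1
        have hd2 : HasDerivWithinAt (fun s => φ₂ s x₀) (φt₂ t₀ x₀) (Set.Icc 0 T) t₀ :=
          (hD₂ t₀ ht₀ x₀ hx₀).1
        have hlin : HasDerivAt (fun s : ℝ => K * (T - s)) (-K) t₀ := by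
          have := ((hasDerivAt_const t₀ T).sub (hasDerivAt_id t₀)).const_mul K
          simpa using this
        have hexp : HasDerivAt (fun s : ℝ => Real.exp (K * (T - s))) (e * (-K)) t₀ := by
          simpa [hedef] using hlin.exp
        have hZt : HasDerivWithinAt (fun s => Z (s, x₀))
            (φt₁ t₀ x₀ - φt₂ t₀ x₀ - ε * (e * (-K)) * c) (Set.Icc 0 T) t₀ := by
          have h3 : HasDerivAt (fun s : ℝ => ε * Real.exp (K * (T - s)) * c)
              (ε * (e * (-K)) * c) t₀ := by
            have := (hexp.const_mul ε).mul_const c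
            convert this using 1 <;> ring
          exact (hd1.sub hd2).sub h3.hasDerivWithinAt
        have hmaxT : ∀ s ∈ Set.Icc (0:ℝ) T, (fun s => Z (s, x₀)) s ≤ (fun s => Z (s, x₀)) t₀ :=
          fun s hs => hmax (s, x₀) ⟨hs, hx₀⟩
        have := maxOn_deriv_nonpos hmaxT hZt (by linarith : (0:ℝ) < T - t₀)
          (fun u hu => ⟨by linarith [hu.1, ht₀.1], by linarith [hu.2]⟩)
        nlinarith
      -- space direction
      set X' : ℝ → ℝ := fun x => φx₁ t₀ x - φx₂ t₀ x
        - ε * e * (2 * (2 * x / L - 1) * (2 / L)) with hX'def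
      have hpoly : ∀ x : ℝ, HasDerivAt (fun z : ℝ => (2 * z / L - 1) ^ 2)
          (2 * (2 * x / L - 1) * (2 / L)) x := by
        intro x
        have h1 : HasDerivAt (fun z : ℝ => 2 * z / L - 1) (2 / L) x := by
          have := (((hasDerivAt_id x).const_mul (2:ℝ)).div_const L).sub_const 1
          simpa using this
        have := h1.pow 2
        exact this.congr_deriv (by norm_num)
      have hXd : ∀ x ∈ Set.Icc (0:ℝ) L,
          HasDerivWithinAt (fun z => Z (t₀, z)) (X' x) (Set.Icc 0 L) x := by
        intro x hx
        have hd1 := (hD₁ t₀ ht₀ x hx).2.1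
        have hd2 := (hD₂ t₀ ht₀ x hx).2.1
        have h3 : HasDerivAt (fun z : ℝ => ε * Real.exp (K * (T - t₀)) * (1 + (2 * z / L - 1) ^ 2))
            (ε * e * (2 * (2 * x / L - 1) * (2 / L))) x := by
          have := ((hpoly x).const_add (1:ℝ)).const_mul (ε * Real.exp (K * (T - t₀)))
          convert this using 1 <;> (simp only [hedef]; try ring)
        exact (hd1.sub hd2).sub h3.hasDerivWithinAt
      have hmaxX : ∀ x ∈ Set.Icc (0:ℝ) L, (fun z => Z (t₀, z)) x ≤ (fun z => Z (t₀, z)) x₀ :=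
        fun x hx => hmax (t₀, x) ⟨ht₀, hx⟩
      rcases eq_or_lt_of_le (hx₀.1 : (0:ℝ) ≤ x₀) with hx0 | hx0
      · -- x₀ = 0 : contradiction with Neumann condition
        have hd := maxOn_deriv_nonpos (a := x₀) hmaxX (hXd x₀ hx₀)
          (by linarith [hx₀.1, hL] : (0:ℝ) < L - x₀)
          (fun u hu => ⟨by linarith [hu.1, hx₀.1], by linarith [hu.2]⟩)
        have hbd : φx₁ t₀ 0 - φx₂ t₀ 0 = 0 := by
          rw [(hB₁ t₀ ht₀).1, (hB₂ t₀ ht₀).1]; ring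
        rw [hX'def] at hd
        simp only [← hx0] at hd
        rw [hbd] at hd
        have : 2 * (0:ℝ) / L - 1 = -1 := by field_simp; ring
        rw [this] at hd
        nlinarith [mul_pos (mul_pos hε he) (div_pos (by norm_num : (0:ℝ) < 2) hL)]
      rcases eq_or_lt_of_le (hx₀.2 : x₀ ≤ L) with hxL | hxL
      · -- x₀ = L : contradiction with Neumann condition
        have hd := maxOn_deriv_nonneg (a := x₀) hmaxX (hXd x₀ hx₀)
          (by linarith : (0:ℝ) < x₀)
          (fun u hu => ⟨by linarith [hu.1], by linarith [hu.2, hx₀.2]⟩)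
        have hbd : φx₁ t₀ L - φx₂ t₀ L = 0 := by
          rw [(hB₁ t₀ ht₀).2, (hB₂ t₀ ht₀).2]; ring
        rw [hX'def] at hd
        simp only [hxL] at hd
        rw [hbd] at hd
        have : 2 * L / L - 1 = 1 := by field_simp <;> norm_num
        rw [this] at hd
        nlinarith [mul_pos (mul_pos hε he) (div_pos (by norm_num : (0:ℝ) < 2) hL)]
      -- interior case
      have hx₀in : x₀ ∈ Ioo (0:ℝ) L := ⟨hx0, hxL⟩
      have hX'0 : X' x₀ = 0 := by
        have h1 : X' x₀ ≤ 0 := maxOn_deriv_nonpos hmaxX (hXd x₀ hx₀)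
          (by linarith : (0:ℝ) < L - x₀)
          (fun u hu => ⟨by linarith [hu.1, hx₀.1], by linarith [hu.2]⟩)
        have h2 : (0:ℝ) ≤ X' x₀ := maxOn_deriv_nonneg hmaxX (hXd x₀ hx₀)
          (by linarith : (0:ℝ) < x₀)
          (fun u hu => ⟨by linarith [hu.1], by linarith [hu.2, hx₀.2]⟩)
        linarith
      have hwx : φx₁ t₀ x₀ - φx₂ t₀ x₀ = ε * e * (2 * (2 * x₀ / L - 1) * (2 / L)) := by
        rw [hX'def] at hX'0
        simp only at hX'0
        linarith
      -- second derivative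
      have hX'' : HasDerivWithinAt X'
          (φxx₁ t₀ x₀ - φxx₂ t₀ x₀ - ε * e * (8 / L ^ 2)) (Set.Icc 0 L) x₀ := by
        have hd1 := (hD₁ t₀ ht₀ x₀ hx₀).2.2
        have hd2 := (hD₂ t₀ ht₀ x₀ hx₀).2.2
        have h3 : HasDerivAt (fun z : ℝ => ε * e * (2 * (2 * z / L - 1) * (2 / L)))
            (ε * e * (8 / L ^ 2)) x₀ := by
          have h4 : HasDerivAt (fun z : ℝ => 2 * (2 * z / L - 1) * (2 / L)) (8 / L ^ 2) x₀ := by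
            have h5 : HasDerivAt (fun z : ℝ => 2 * z / L - 1) (2 / L) x₀ := by
              have := (((hasDerivAt_id x₀).const_mul (2:ℝ)).div_const L).sub_const 1
              simpa using this
            have := (h5.const_mul (2:ℝ)).mul_const (2 / L)
            exact this.congr_deriv (by ring)
          have := h4.const_mul (ε * e)
          convert this using 1 <;> ring
        exact (hd1.sub hd2).sub h3.hasDerivWithinAt
      have hwxx : φxx₁ t₀ x₀ - φxx₂ t₀ x₀ ≤ ε * e * (8 / L ^ 2) := by
        have := secondDeriv_nonpos_at_max hx₀in hXd hX'' hmaxX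
        linarith
      -- the PDE at (t₀, x₀)
      have hpde1 := hP₁ t₀ ht₀ x₀ hx₀
      have hpde2 := hP₂ t₀ ht₀ x₀ hx₀
      -- Hamiltonian Lipschitz bound
      have hHam : |(⨅ u : U, (f t₀ x₀ u + b t₀ x₀ u * φx₁ t₀ x₀))
          - (⨅ u : U, (f t₀ x₀ u + b t₀ x₀ u * φx₂ t₀ x₀))|
          ≤ M * |φx₁ t₀ x₀ - φx₂ t₀ x₀| := by
        apply hamiltonian_lipschitz (F := F)
        · intro u
          have := hF₀ (t₀, x₀, u) ⟨ht₀, hx₀, u.2⟩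
          rw [Real.norm_eq_abs] at this
          exact this.trans (le_max_left _ _)
        · intro u
          have := hM₀ (t₀, x₀, u) ⟨ht₀, hx₀, u.2⟩
          rw [Real.norm_eq_abs] at this
          exact this.trans (le_max_left _ _)
        · exact hM0
      clear_value Z X' e c K M F
      -- bound |2x₀/L - 1| ≤ 1
      have habs1 : |2 * x₀ / L - 1| ≤ 1 := by
        rw [abs_le]
        have h1 : 2 * x₀ / L ≤ 2 := by rw [div_le_iff₀ hL]; linarith [hx₀.2]
        have h2 : 0 ≤ 2 * x₀ / L := div_nonneg (by linarith [hx₀.1]) hL.le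
        constructor <;> linarith
      -- bound |wx|
      have hwxabs : |φx₁ t₀ x₀ - φx₂ t₀ x₀| ≤ ε * e * (4 / L) := by
        rw [hwx]
        have h1 : |ε * e * (2 * (2 * x₀ / L - 1) * (2 / L))|
            = (ε * e) * (2 * |2 * x₀ / L - 1| * (2 / L)) := by
          rw [abs_mul, abs_of_pos (mul_pos hε he)]
          congr 1
          rw [abs_mul, abs_mul]
          rw [abs_of_nonneg (by norm_num : (0:ℝ) ≤ 2), abs_of_nonneg (by positivity : (0:ℝ) ≤ 2/L)]
        rw [h1]
        have h2 : 2 * |2 * x₀ / L - 1| * (2 / L) ≤ 4 / L := by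
          have h3 : (0:ℝ) ≤ 2 / L := by positivity
          have h4 : (0:ℝ) ≤ (1 - |2 * x₀ / L - 1|) * (2 / L) :=
            mul_nonneg (by linarith) h3
          have h5 : (1 - |2 * x₀ / L - 1|) * (2 / L)
              = 2 / L - 2 * |2 * x₀ / L - 1| / L := by ring
          rw [h5] at h4
          have h6 : 2 * |2 * x₀ / L - 1| * (2 / L)
              = 2 * (2 * |2 * x₀ / L - 1| / L) := by ring
          have h7 : (4:ℝ) / L = 2 * (2 / L) := by ring
          rw [h6, h7]
          linarith
        nlinarith [mul_pos hε he]
      -- combine via the PDE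
      have hwteq : φt₁ t₀ x₀ - φt₂ t₀ x₀
          = -((⨅ u : U, (f t₀ x₀ u + b t₀ x₀ u * φx₁ t₀ x₀))
            - (⨅ u : U, (f t₀ x₀ u + b t₀ x₀ u * φx₂ t₀ x₀)))
            - (1 / 2) * σ ^ 2 * (φxx₁ t₀ x₀ - φxx₂ t₀ x₀) := by
        linear_combination hpde2 - hpde1
      have hABbd : |(⨅ u : U, (f t₀ x₀ u + b t₀ x₀ u * φx₁ t₀ x₀))
          - (⨅ u : U, (f t₀ x₀ u + b t₀ x₀ u * φx₂ t₀ x₀))| ≤ M * (ε * e * (4 / L)) :=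
        hHam.trans (mul_le_mul_of_nonneg_left hwxabs hM0)
      have hAB := abs_le.1 hABbd
      have hhalf : (0:ℝ) ≤ (1/2) * σ ^ 2 := by positivity
      have h2 : (1/2) * σ ^ 2 * (φxx₁ t₀ x₀ - φxx₂ t₀ x₀)
          ≤ (1/2) * σ ^ 2 * (ε * e * (8 / L ^ 2)) := mul_le_mul_of_nonneg_left hwxx hhalf
      have hwtlb : -(M * (ε * e * (4 / L))) - (1/2) * σ ^ 2 * (ε * e * (8 / L ^ 2))
          ≤ φt₁ t₀ x₀ - φt₂ t₀ x₀ := by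
        rw [hwteq]
        linarith [hAB.2]
      have hub : φt₁ t₀ x₀ - φt₂ t₀ x₀ ≤ -(ε * K * e) := by
        have hc' : 0 ≤ ε * K * e * (c - 1) :=
          mul_nonneg (mul_nonneg (mul_nonneg hε.le (by linarith)) he.le) (by linarith)
        nlinarith
      have expand : ε * e * K = M * (ε * e * (4 / L))
          + (1/2) * σ ^ 2 * (ε * e * (8 / L ^ 2)) + ε * e := by
        rw [hKdef]; ring
      have hpos : 0 < ε * e := mul_pos hε he
      nlinarith
  -- conclude from the ε-claim
  intro t ht x hx
  have hβ : (2 * x / L - 1) ^ 2 ≤ 1 := by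
    have h1 : 2 * x / L ≤ 2 := by rw [div_le_iff₀ hL]; linarith [hx.2]
    have h2 : 0 ≤ 2 * x / L := div_nonneg (by linarith [hx.1]) hL.le
    nlinarith
  have hexp : Real.exp (K * (T - t)) ≤ Real.exp (K * T) := by
    apply Real.exp_le_exp.2
    nlinarith [ht.1, ht.2, hK1]
  have hexppos : (0:ℝ) < Real.exp (K * T) := Real.exp_pos _
  apply le_of_forall_pos_le_add
  intro δ hδ
  set C : ℝ := 2 * Real.exp (K * T) with hCdef
  have hCpos : 0 < C := by positivity
  have hm := main (δ / C) (div_pos hδ hCpos) t ht x hx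
  have hbound : (δ / C) * Real.exp (K * (T - t)) * (1 + (2 * x / L - 1) ^ 2) ≤ δ := by
    have hd : 0 < δ / C := div_pos hδ hCpos
    have hβ2 : 0 ≤ 1 + (2 * x / L - 1) ^ 2 := by positivity
    have h1 : (δ / C) * Real.exp (K * (T - t)) * (1 + (2 * x / L - 1) ^ 2)
        ≤ (δ / C) * Real.exp (K * T) * 2 := by
      calc (δ / C) * Real.exp (K * (T - t)) * (1 + (2 * x / L - 1) ^ 2)
          ≤ (δ / C) * Real.exp (K * T) * (1 + (2 * x / L - 1) ^ 2) :=
            mul_le_mul_of_nonneg_right (mul_le_mul_of_nonneg_left hexp hd.le) hβ2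
        _ ≤ (δ / C) * Real.exp (K * T) * 2 :=
            mul_le_mul_of_nonneg_left (by linarith)
              (mul_nonneg hd.le hexppos.le)
    have h2 : (δ / C) * Real.exp (K * T) * 2 = δ := by
      rw [hCdef]
      field_simp
    linarith
  linarith


/-- Uniqueness of classical solutions of the HJB equation with Neumann-type
boundary conditions: two classical solutions coincide on `[0,T] × [0,L]`. -/
theorem hjb_uniqueness
    (T L σ : ℝ) (hT : 0 < T) (hL : 0 < L) (hσ : 0 < σ)
    (U : Set ℝ) (hUc : IsCompact U) (hUne : U.Nonempty)
    (f b : ℝ → ℝ → ℝ → ℝ)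
    (hf : ContinuousOn (fun q : ℝ × ℝ × ℝ => f q.1 q.2.1 q.2.2)
      (Set.Icc 0 T ×ˢ Set.Icc 0 L ×ˢ U))
    (hb : ContinuousOn (fun q : ℝ × ℝ × ℝ => b q.1 q.2.1 q.2.2)
      (Set.Icc 0 T ×ˢ Set.Icc 0 L ×ˢ U))
    (g y r : ℝ → ℝ)
    (hg : ContinuousOn g (Set.Icc 0 L))
    (hy : ContinuousOn y (Set.Icc 0 T)) (hr : ContinuousOn r (Set.Icc 0 T))
    (φ₁ φ₂ : ℝ → ℝ → ℝ)
    (h₁ : IsHJBSolution T L σ U f b g y r φ₁)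
    (h₂ : IsHJBSolution T L σ U f b g y r φ₂) :
    ∀ t ∈ Set.Icc (0 : ℝ) T, ∀ x ∈ Set.Icc (0 : ℝ) L, φ₁ t x = φ₂ t x := by
  intro t ht x hx
  exact le_antisymm
    (hjb_le T L σ hT hL hσ U hUc hUne f b hf hb g y r φ₁ φ₂ h₁ h₂ t ht x hx)
    (hjb_le T L σ hT hL hσ U hUc hUne f b hf hb g y r φ₂ φ₁ h₂ h₁ t ht x hx)
end

section
/- Let c_m > 0 and let U = [u₀, u₁] ⊆ ℝ be a nonempty compact interval. Let φ, ψ : ℝ → ℝ be differentiable on U. Assume ψ satisfies the strong convexity inequality ψ(β) ≥ ψ(α) + (β − α) ψ'(α) + c_m (β − α)² for all α, β ∈ U. Let a ∈ U be a minimizer of φ over U and b ∈ U be a minimizer of ψ over U. Then c_m |b − a|² ≤ |b − a| · |ψ'(a) − φ'(a)|; in particular |b − a| ≤ |ψ'(a) − φ'(a)| / c_m. -/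
/-- Quantitative stability of minimizers over a compact interval: if `ψ` is
strongly convex on `U = [u₀,u₁]` with parameter `c_m` and `a`, `b` minimize
`φ`, `ψ` respectively over `U`, then
`c_m |b−a|² ≤ |b−a|·|ψ'(a) − φ'(a)|`, hence `|b−a| ≤ |ψ'(a) − φ'(a)|/c_m`. -/
theorem minimizer_stability
    (c_m u₀ u₁ : ℝ) (hcm : 0 < c_m) (hU : u₀ ≤ u₁)
    (φ ψ φ' ψ' : ℝ → ℝ)
    (hφ : ∀ u ∈ Set.Icc u₀ u₁, HasDerivWithinAt φ (φ' u) (Set.Icc u₀ u₁) u)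
    (hψ : ∀ u ∈ Set.Icc u₀ u₁, HasDerivWithinAt ψ (ψ' u) (Set.Icc u₀ u₁) u)
    (hconv : ∀ α ∈ Set.Icc u₀ u₁, ∀ β ∈ Set.Icc u₀ u₁,
      ψ α + (β - α) * ψ' α + c_m * (β - α) ^ 2 ≤ ψ β)
    (a b : ℝ) (ha : a ∈ Set.Icc u₀ u₁) (hb : b ∈ Set.Icc u₀ u₁)
    (hamin : ∀ u ∈ Set.Icc u₀ u₁, φ a ≤ φ u)
    (hbmin : ∀ u ∈ Set.Icc u₀ u₁, ψ b ≤ ψ u) :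
    c_m * |b - a| ^ 2 ≤ |b - a| * |ψ' a - φ' a| ∧
      |b - a| ≤ |ψ' a - φ' a| / c_m := by
  -- first-order optimality of φ at a in direction b - a
  have htan : b - a ∈ posTangentConeAt (Set.Icc u₀ u₁) a :=
    sub_mem_posTangentConeAt_of_segment_subset
      ((convex_Icc u₀ u₁).segment_subset ha hb)
  have hmin : IsLocalMinOn φ (Set.Icc u₀ u₁) a :=
    (isMinOn_iff.2 hamin).localize
  have hfoc : 0 ≤ (b - a) * φ' a := by
    have := hmin.hasFDerivWithinAt_nonneg (hφ a ha).hasFDerivWithinAt htan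
    simpa [mul_comm] using this
  -- strong convexity + minimality of ψ at b
  have hsc := hconv a ha b hb
  have hψb : ψ b ≤ ψ a := hbmin a ha
  have key : c_m * (b - a) ^ 2 ≤ (a - b) * (ψ' a - φ' a) := by nlinarith
  have h1 : c_m * |b - a| ^ 2 ≤ |b - a| * |ψ' a - φ' a| := by
    have habs : (a - b) * (ψ' a - φ' a) ≤ |b - a| * |ψ' a - φ' a| := by
      calc (a - b) * (ψ' a - φ' a) ≤ |(a - b) * (ψ' a - φ' a)| := le_abs_self _
        _ = |b - a| * |ψ' a - φ' a| := by rw [abs_mul, abs_sub_comm]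
    calc c_m * |b - a| ^ 2 = c_m * (b - a) ^ 2 := by rw [sq_abs]
      _ ≤ _ := key.trans habs
  refine ⟨h1, ?_⟩
  rcases eq_or_ne b a with h | h
  · simp only [h, sub_self, abs_zero]
    positivity
  · have hpos : 0 < |b - a| := abs_pos.2 (sub_ne_zero.2 h)
    rw [le_div_iff₀ hcm]
    have := h1
    rw [pow_two] at this
    calc |b - a| * c_m = c_m * |b - a| := mul_comm _ _
      _ ≤ |ψ' a - φ' a| := by
        nlinarith
end
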